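/- Let B ∈ ℂ^{k×k} and D ∈ ℂ^{m×m} be Hermitian positive semidefinite and let C ∈ ℂ^{m×k} be such that the block matrix [[B, Cᴴ], [C, D]] ∈ ℂ^{(k+m)×(k+m)} is positive semidefinite. Let Y ∈ ℂ^{m×k} with Y ≠ 0 and range(Yᴴ) ⊆ range(B). Let B^{1/2} denote the positive semidefinite square root of B, let G ∈ ℂ^{k×m} be any matrix with B^{1/2}·G = Yᴴ, set α := ‖G·(D + ‖Y‖·I_m)^{−1/2}‖, where ‖·‖ denotes the spectral (L²-operator) norm and (D + ‖Y‖·I_m)^{−1/2} is the inverse of the positive definite square root of D + ‖Y‖·I_m, and set W := (α² + 2α)·(D + ‖Y‖·I_m) + ‖Y‖·I_m. Then the block matrix [[B, (C + Y)ᴴ], [C + Y, D + W]] is positive semidefinite. -/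

import Mathlib

open Matrix ComplexOrder

/-- The spectral (L²-operator) norm of a complex matrix. -/
noncomputable def specNorm {p q : ℕ} (M : Matrix (Fin p) (Fin q) ℂ) : ℝ :=
  ‖LinearMap.toContinuousLinearMap (Matrix.toEuclideanLin M)‖

noncomputable def en {ι : Type*} [Fintype ι] (v : ι → ℂ) : ℝ :=
  ‖(WithLp.equiv 2 (ι → ℂ)).symm v‖

lemma en_nonneg {ι : Type*} [Fintype ι] (v : ι → ℂ) : 0 ≤ en v := norm_nonneg _

lemma en_sq {ι : Type*} [Fintype ι] (v : ι → ℂ) : en v ^ 2 = (star v ⬝ᵥ v).re := by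
  have h := inner_self_eq_norm_sq (𝕜 := ℂ) ((WithLp.equiv 2 (ι → ℂ)).symm v)
  rw [show inner ℂ ((WithLp.equiv 2 (ι → ℂ)).symm v) ((WithLp.equiv 2 (ι → ℂ)).symm v)
    = star v ⬝ᵥ v by rw [dotProduct_comm]; rfl] at h
  exact h.symm

lemma cs_re {ι : Type*} [Fintype ι] (u w : ι → ℂ) : -(en u * en w) ≤ (star u ⬝ᵥ w).re := by
  have h := norm_inner_le_norm (𝕜 := ℂ) ((WithLp.equiv 2 (ι → ℂ)).symm u)
    ((WithLp.equiv 2 (ι → ℂ)).symm w)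
  rw [show inner ℂ ((WithLp.equiv 2 (ι → ℂ)).symm u) ((WithLp.equiv 2 (ι → ℂ)).symm w)
    = star u ⬝ᵥ w by rw [dotProduct_comm]; rfl] at h
  have h2 : -(‖(star u ⬝ᵥ w : ℂ)‖) ≤ (star u ⬝ᵥ w).re := by
    have := Complex.abs_re_le_norm (star u ⬝ᵥ w)
    cases abs_le.1 this; linarith
  calc -(en u * en w) ≤ -(‖(star u ⬝ᵥ w : ℂ)‖) := by simpa [en] using neg_le_neg h
    _ ≤ _ := h2

lemma en_mulVec_le {p q : ℕ} (M : Matrix (Fin p) (Fin q) ℂ) (v : Fin q → ℂ) :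
    en (M *ᵥ v) ≤ specNorm M * en v := by
  have h := (LinearMap.toContinuousLinearMap (Matrix.toEuclideanLin M)).le_opNorm
    ((WithLp.equiv 2 (Fin q → ℂ)).symm v)
  simpa [specNorm, en, Matrix.toEuclideanLin_toLp, Matrix.toLin'_apply] using h

lemma quad_eq {n p q : Type*} [Fintype n] [Fintype p] [Fintype q] (M : Matrix p n ℂ)
    (N : Matrix p q ℂ) (v : n → ℂ) (w : q → ℂ) :
    star (M *ᵥ v) ⬝ᵥ (N *ᵥ w) = star v ⬝ᵥ ((Mᴴ * N) *ᵥ w) := by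
  rw [star_mulVec, dotProduct_mulVec, dotProduct_mulVec, vecMul_vecMul]

set_option maxHeartbeats 1000000 in
/-- Lemma 5.6: semidefiniteness-preserving perturbation of the block matrix
`[[B, Cᴴ], [C, D]]`. -/
theorem stmt_19 {k m : ℕ}
    (B : Matrix (Fin k) (Fin k) ℂ) (D : Matrix (Fin m) (Fin m) ℂ)
    (C Y : Matrix (Fin m) (Fin k) ℂ)
    (hB : B.PosSemidef) (hD : D.PosSemidef)
    (hT : (Matrix.fromBlocks B Cᴴ C D).PosSemidef)
    (hY : Y ≠ 0)
    (hYrange : LinearMap.range (Matrix.mulVecLin Yᴴ) ≤ LinearMap.range (Matrix.mulVecLin B))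
    (Bsqrt : Matrix (Fin k) (Fin k) ℂ)
    (hBsqrt : Bsqrt.PosSemidef) (hBsqrt2 : Bsqrt * Bsqrt = B)
    (G : Matrix (Fin k) (Fin m) ℂ) (hG : Bsqrt * G = Yᴴ)
    (Dsqrt : Matrix (Fin m) (Fin m) ℂ)
    (hDsqrt : Dsqrt.PosDef)
    (hDsqrt2 : Dsqrt * Dsqrt = D + ((specNorm Y : ℝ) : ℂ) • (1 : Matrix (Fin m) (Fin m) ℂ))
    (α : ℝ) (hα : α = specNorm (G * Dsqrt⁻¹))
    (W : Matrix (Fin m) (Fin m) ℂ)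
    (hW : W = ((α ^ 2 + 2 * α : ℝ) : ℂ) •
        (D + ((specNorm Y : ℝ) : ℂ) • (1 : Matrix (Fin m) (Fin m) ℂ)) +
      ((specNorm Y : ℝ) : ℂ) • (1 : Matrix (Fin m) (Fin m) ℂ)) :
    (Matrix.fromBlocks B (C + Y)ᴴ (C + Y) (D + W)).PosSemidef := by
  have hc0 : (0:ℝ) ≤ specNorm Y := norm_nonneg _
  set c : ℝ := specNorm Y with hc
  have hα0 : 0 ≤ α := hα ▸ norm_nonneg _
  have hWh : W.IsHermitian := by
    rw [hW]
    unfold Matrix.IsHermitian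
    simp [conjTranspose_add, conjTranspose_smul, hD.1.eq, Complex.star_def,
      Complex.conj_ofReal]
  have hherm : (Matrix.fromBlocks B (C + Y)ᴴ (C + Y) (D + W)).IsHermitian := by
    rw [Matrix.isHermitian_fromBlocks_iff]
    exact ⟨hB.1, conjTranspose_conjTranspose _, rfl, hD.1.add hWh⟩
  refine Matrix.PosSemidef.of_dotProduct_mulVec_nonneg hherm (fun v => ?_)
  set x : Fin k → ℂ := v ∘ Sum.inl with hx
  set y : Fin m → ℂ := v ∘ Sum.inr with hy
  have hv : v = Sum.elim x y := by funext i; cases i <;> rfl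
  set z := star v ⬝ᵥ (Matrix.fromBlocks B (C + Y)ᴴ (C + Y) (D + W)) *ᵥ v with hz
  have him : z.im = 0 := by
    have h : star z = z := by
      rw [hz]
      nth_rewrite 1 [star_dotProduct]
      rw [star_star, star_mulVec, ← dotProduct_mulVec, hherm.eq]
    exact Complex.conj_eq_iff_im.1 h
  have hconj : star x ⬝ᵥ (C + Y)ᴴ *ᵥ y = star (star y ⬝ᵥ (C + Y) *ᵥ x) := by
    rw [star_dotProduct, star_mulVec, conjTranspose_conjTranspose, ← dotProduct_mulVec]
  have hexp : z = star x ⬝ᵥ B *ᵥ x + star x ⬝ᵥ (C + Y)ᴴ *ᵥ y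
      + (star y ⬝ᵥ (C + Y) *ᵥ x + star y ⬝ᵥ (D + W) *ᵥ y) := by
    rw [hz, hv]
    simp [Function.star_sumElim, fromBlocks_mulVec, sumElim_dotProduct_sumElim,
      dotProduct_add]
  set qB := (star x ⬝ᵥ B *ᵥ x).re with hqBd
  set qC := (star y ⬝ᵥ C *ᵥ x).re with hqCd
  set qY := (star y ⬝ᵥ Y *ᵥ x).re with hqYd
  set qD := (star y ⬝ᵥ D *ᵥ y).re with hqDd
  set qW := (star y ⬝ᵥ W *ᵥ y).re with hqWd
  have hzre : z.re = qB + 2*(qC + qY) + (qD + qW) := by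
    rw [hexp, hconj]
    simp only [add_mulVec, dotProduct_add, Complex.add_re, Complex.conj_re,
      RCLike.star_def]
    ring
  -- the T-sqrt machinery
  set T := Matrix.fromBlocks B Cᴴ C D with hTd
  obtain ⟨R, hR, hRh⟩ : ∃ R : Matrix (Fin k ⊕ Fin m) (Fin k ⊕ Fin m) ℂ, R * R = T ∧ Rᴴ = R := by
    open scoped MatrixOrder in
    exact ⟨CFC.sqrt T, CFC.sqrt_mul_sqrt_self T (Matrix.nonneg_iff_posSemidef.2 hT),
      (CFC.sqrt_nonneg T).posSemidef.1⟩
  set u1 : (Fin k ⊕ Fin m) → ℂ := Sum.elim x 0 with hu1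
  set u2 : (Fin k ⊕ Fin m) → ℂ := Sum.elim 0 y with hu2
  have h11 : star u1 ⬝ᵥ T *ᵥ u1 = star x ⬝ᵥ B *ᵥ x := by
    simp [hu1, hTd, Function.star_sumElim, fromBlocks_mulVec,
      sumElim_dotProduct_sumElim]
  have h22 : star u2 ⬝ᵥ T *ᵥ u2 = star y ⬝ᵥ D *ᵥ y := by
    simp [hu2, hTd, Function.star_sumElim, fromBlocks_mulVec,
      sumElim_dotProduct_sumElim]
  have h21 : star u2 ⬝ᵥ T *ᵥ u1 = star y ⬝ᵥ C *ᵥ x := by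
    simp [hu1, hu2, hTd, Function.star_sumElim, fromBlocks_mulVec,
      sumElim_dotProduct_sumElim]
  set a := en (Bsqrt *ᵥ x) with had
  set ea := en (R *ᵥ u1) with head
  set eb := en (R *ᵥ u2) with hebd
  set g := en (G *ᵥ y) with hgd
  set d := en (Dsqrt *ᵥ y) with hdd
  set ny := en y with hnyd
  have ha2 : a ^ 2 = qB := by rw [had, en_sq, quad_eq, hBsqrt.1.eq, hBsqrt2]
  have hea2 : ea ^ 2 = qB := by rw [head, en_sq, quad_eq, hRh, hR, h11]
  have heb2 : eb ^ 2 = qD := by rw [hebd, en_sq, quad_eq, hRh, hR, h22]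
  have hny2 : ny ^ 2 = (star y ⬝ᵥ y).re := en_sq y
  have hd2 : d ^ 2 = qD + c * ny ^ 2 := by
    rw [hdd, en_sq, quad_eq, hDsqrt.1.eq, hDsqrt2]
    simp only [add_mulVec, dotProduct_add, smul_mulVec, one_mulVec,
      dotProduct_smul, smul_eq_mul, Complex.add_re, Complex.mul_re,
      Complex.ofReal_re, Complex.ofReal_im, hny2]
    ring
  have hqW : qW = (α^2 + 2*α) * d ^ 2 + c * ny ^ 2 := by
    have hDc : (star y ⬝ᵥ (D + (c:ℂ) • (1 : Matrix (Fin m) (Fin m) ℂ)) *ᵥ y).re = d ^ 2 := by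
      rw [hdd, en_sq, quad_eq, hDsqrt.1.eq, hDsqrt2]
    rw [hqWd, hW]
    simp only [add_mulVec, dotProduct_add, smul_mulVec, one_mulVec,
      dotProduct_smul, smul_eq_mul, Complex.add_re, Complex.mul_re,
      Complex.ofReal_re, Complex.ofReal_im, hny2] at hDc ⊢
    ring_nf at hDc ⊢
    nlinarith [hDc]
  have hqC : -(eb * ea) ≤ qC := by
    have h := cs_re (R *ᵥ u2) (R *ᵥ u1)
    rw [quad_eq, hRh, hR, h21] at h
    exact h
  have hYGB : Gᴴ * Bsqrt = Y := by
    calc Gᴴ * Bsqrt = Gᴴ * Bsqrtᴴ := by rw [hBsqrt.1.eq]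
      _ = (Bsqrt * G)ᴴ := (conjTranspose_mul _ _).symm
      _ = Yᴴᴴ := by rw [hG]
      _ = Y := conjTranspose_conjTranspose Y
  have hqY : -(g * a) ≤ qY := by
    have h := cs_re (G *ᵥ y) (Bsqrt *ᵥ x)
    rw [quad_eq, hYGB] at h
    exact h
  have hga : g ≤ α * d := by
    have hinv : G * Dsqrt⁻¹ * Dsqrt = G := by
      rw [Matrix.mul_assoc, Matrix.nonsing_inv_mul _
        ((Matrix.isUnit_iff_isUnit_det _).1 hDsqrt.isUnit), Matrix.mul_one]
    have hmul : G *ᵥ y = (G * Dsqrt⁻¹) *ᵥ (Dsqrt *ᵥ y) := by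
      rw [mulVec_mulVec, hinv]
    rw [hgd, hmul, hα]
    exact en_mulVec_le _ _
  have heaa : ea = a := by
    have h1 : ea = Real.sqrt (ea ^ 2) := (Real.sqrt_sq (en_nonneg _)).symm
    have h2 : a = Real.sqrt (a ^ 2) := (Real.sqrt_sq (en_nonneg _)).symm
    rw [h1, h2, hea2, ha2]
  have hde : eb ≤ d := by
    nlinarith [en_nonneg (R *ᵥ u2), en_nonneg (Dsqrt *ᵥ y), heb2, hd2,
      mul_nonneg hc0 (sq_nonneg ny)]
  have hre : 0 ≤ z.re := by
    rw [hzre]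
    have hqY' : -(α * d * a) ≤ qY := by
      have : g * a ≤ α * d * a := mul_le_mul_of_nonneg_right hga (en_nonneg _)
      linarith
    rw [heaa] at hqC
    nlinarith [sq_nonneg (a - eb - α*d), mul_nonneg (mul_nonneg hα0 (en_nonneg (Dsqrt *ᵥ y)))
      (sub_nonneg.2 hde), mul_nonneg hc0 (sq_nonneg ny), ha2, heb2, hd2, hqW, hqC, hqY']
  show 0 ≤ z
  rw [Complex.nonneg_iff]
  exact ⟨hre, him.symm⟩
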